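/- With Q ∈ ℝ^{m×r}, P ∈ ℝ^{n×r} having orthonormal columns, B ∈ ℝ^{r×r}, b ∈ ℝ^m, c ∈ ℝ^n, and b̃ = Qᵀb, b⊥ = b − Qb̃, δ = ‖b⊥‖ > 0, c̃ = Pᵀc, c⊥ = c − Pc̃, γ = ‖c⊥‖ > 0, the rank-one update satisfies Q B Pᵀ + b cᵀ = [Q, b⊥/δ] · ( [[B, 0],[0, 0]] + [b̃; δ]·[c̃ᵀ, γ] ) · [P, c⊥/γ]ᵀ. -/

import Mathlib

open Matrix BigOperators


lemma mul_vecMulVec_mul {m k l n : Type*} [Fintype k] [Fintype l]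
    (M : Matrix m k ℝ) (u : k → ℝ) (v : l → ℝ) (N : Matrix l n ℝ) :
    M * Matrix.vecMulVec u v * N = Matrix.vecMulVec (M.mulVec u) (Matrix.vecMul v N) := by
  ext i j
  rw [Matrix.vecMulVec_eq (Fin 1), Matrix.vecMulVec_eq (Fin 1), Matrix.replicateCol_mulVec,
    Matrix.replicateRow_vecMul]
  simp [Matrix.mul_assoc]

/-- Rank-one subspace update factorization:
`Q B Pᵀ + b cᵀ = [Q, b⊥/δ] ( [[B,0],[0,0]] + [b̃; δ][c̃ᵀ, γ] ) [P, c⊥/γ]ᵀ`. -/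
theorem rank_one_update_augmented_factorization (m n r : ℕ)
    (Q : Matrix (Fin m) (Fin r) ℝ) (hQ : Qᵀ * Q = 1)
    (P : Matrix (Fin n) (Fin r) ℝ) (hP : Pᵀ * P = 1)
    (B : Matrix (Fin r) (Fin r) ℝ)
    (b : Fin m → ℝ) (c : Fin n → ℝ)
    (btil : Fin r → ℝ) (hbtil : btil = Qᵀ.mulVec b)
    (bperp : Fin m → ℝ) (hbperp : bperp = b - Q.mulVec btil)
    (δ : ℝ) (hδ : δ = Real.sqrt (∑ a, (bperp a) ^ 2)) (hδpos : 0 < δ)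
    (ctil : Fin r → ℝ) (hctil : ctil = Pᵀ.mulVec c)
    (cperp : Fin n → ℝ) (hcperp : cperp = c - P.mulVec ctil)
    (γ : ℝ) (hγ : γ = Real.sqrt (∑ a, (cperp a) ^ 2)) (hγpos : 0 < γ)
    (Qbar : Matrix (Fin m) (Fin r ⊕ Fin 1) ℝ)
    (hQbar : Qbar = Matrix.fromCols Q (Matrix.of fun a (_ : Fin 1) => bperp a / δ))
    (Pbar : Matrix (Fin n) (Fin r ⊕ Fin 1) ℝ)
    (hPbar : Pbar = Matrix.fromCols P (Matrix.of fun a (_ : Fin 1) => cperp a / γ))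
    (Mid : Matrix (Fin r ⊕ Fin 1) (Fin r ⊕ Fin 1) ℝ)
    (hMid : Mid = Matrix.fromBlocks B 0 0 0 +
      Matrix.vecMulVec (Sum.elim btil (fun _ => δ)) (Sum.elim ctil (fun _ => γ))) :
    Q * B * Pᵀ + Matrix.vecMulVec b c = Qbar * Mid * Pbarᵀ := by
  have hδ0 : δ ≠ 0 := hδpos.ne'
  have hγ0 : γ ≠ 0 := hγpos.ne'
  have hb : Qbar.mulVec (Sum.elim btil fun _ => δ) = b := by
    subst hQbar
    rw [Matrix.fromCols_mulVec_sumElim]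
    ext a
    simp [Matrix.mulVec, dotProduct, div_mul_cancel₀ _ hδ0, hbperp]
  have hc : Pbar.mulVec (Sum.elim ctil fun _ => γ) = c := by
    subst hPbar
    rw [Matrix.fromCols_mulVec_sumElim]
    ext a
    simp [Matrix.mulVec, dotProduct, div_mul_cancel₀ _ hγ0, hcperp]
  have hblk : Qbar * (Matrix.fromBlocks B 0 0 0 : Matrix (Fin r ⊕ Fin 1) (Fin r ⊕ Fin 1) ℝ) * Pbarᵀ = Q * B * Pᵀ := by
    subst hQbar hPbar
    rw [Matrix.transpose_fromCols, Matrix.fromCols_mul_fromBlocks,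
      Matrix.fromCols_mul_fromRows]
    simp [Matrix.mul_assoc]
  rw [hMid, Matrix.mul_add, Matrix.add_mul, hblk, mul_vecMulVec_mul,
    Matrix.vecMul_transpose, hb, hc]
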